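/- Let A ∈ ℝ^{m×n}, q < m/2, and suppose for every T ⊆ [m] with |T| = m − 2q the submatrix A_T has rank n (full column rank). Then the robust subspace R = ⋂_{|T|=m−2q} rowspan(A_T) equals ℝ^n, the robust projector U is the identity, and every minimizer of x ↦ ‖y − Ax‖₀ with y = Ax* + e, ‖e‖₀ ≤ q, equals x* exactly. -/

import Mathlib

open Matrix Finset

noncomputable section

/-- ℓ₀ "norm": the number of nonzero coordinates. -/
def l0 {m : ℕ} (w : Fin m → ℝ) : ℕ := (Finset.univ.filter fun i => w i ≠ 0).card

/-- The row span of the submatrix `A_T` (rows of `A` indexed by `T`), viewed inside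
Euclidean space. -/
def rowspanE {m n : ℕ} (A : Matrix (Fin m) (Fin n) ℝ) (T : Finset (Fin m)) :
    Submodule ℝ (EuclideanSpace ℝ (Fin n)) :=
  Submodule.span ℝ {w : EuclideanSpace ℝ (Fin n) | ∃ i ∈ T, w = A i}

/-- The range (column space) of a square matrix, viewed inside Euclidean space. -/
def rangeE {n : ℕ} (M : Matrix (Fin n) (Fin n) ℝ) : Submodule ℝ (EuclideanSpace ℝ (Fin n)) where
  carrier := {x | ∃ v : EuclideanSpace ℝ (Fin n), M.mulVec v = x}
  zero_mem' := ⟨0, Matrix.mulVec_zero M⟩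
  add_mem' := by
    rintro a b ⟨va, ha⟩ ⟨vb, hb⟩
    exact ⟨va + vb, by simp [Matrix.mulVec_add, ha, hb]⟩
  smul_mem' := by
    rintro c a ⟨v, hv⟩
    exact ⟨c • v, by simp [Matrix.mulVec_smul, hv]⟩

/-- Full column rank implies trivial kernel. -/
lemma aux_inj {k : Type*} [Fintype k] {n : ℕ} (M : Matrix k (Fin n) ℝ)
    (h : M.rank = n) {v : Fin n → ℝ} (hv : M.mulVec v = 0) : v = 0 := by
  have h1 := LinearMap.finrank_range_add_finrank_ker M.mulVecLin
  rw [Matrix.rank] at h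
  have h2 : Module.finrank ℝ (Fin n → ℝ) = n := by simp
  rw [h, h2] at h1
  have hker : Module.finrank ℝ (LinearMap.ker M.mulVecLin) = 0 := by omega
  have hb : LinearMap.ker M.mulVecLin = ⊥ := Submodule.finrank_eq_zero.mp hker
  have hv' : v ∈ LinearMap.ker M.mulVecLin := by simpa [Matrix.mulVecLin_apply] using hv
  rw [hb] at hv'
  simpa using hv'

theorem stmt17 {m n : ℕ} (A : Matrix (Fin m) (Fin n) ℝ) (q : ℕ) (hq : 2 * q < m)
    (hrank : ∀ T : Finset (Fin m), T.card = m - 2 * q →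
      (A.submatrix (fun i : T => (i : Fin m)) id).rank = n) :
    (⨅ T ∈ {T : Finset (Fin m) | T.card = m - 2 * q}, rowspanE A T) = ⊤ ∧
      (∀ U : Matrix (Fin n) (Fin n) ℝ, U.IsSymm → U * U = U →
        rangeE U = (⨅ T ∈ {T : Finset (Fin m) | T.card = m - 2 * q}, rowspanE A T) → U = 1) ∧
      ∀ (xs : Fin n → ℝ) (e : Fin m → ℝ) (y : Fin m → ℝ) (xhat : Fin n → ℝ),
        l0 e ≤ q → y = A.mulVec xs + e →
        (∀ x : Fin n → ℝ, l0 (y - A.mulVec xhat) ≤ l0 (y - A.mulVec x)) →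
        xhat = xs := by
  -- Key: each rowspan is ⊤
  have hspan : ∀ T : Finset (Fin m), T.card = m - 2 * q → rowspanE A T = ⊤ := by
    intro T hT
    rw [← Submodule.orthogonal_eq_bot_iff]
    rw [Submodule.eq_bot_iff]
    intro x hx
    have hx' : ∀ i ∈ T, @inner ℝ (EuclideanSpace ℝ (Fin n)) _ (WithLp.toLp 2 (A i)) x = 0 := by
      intro i hi
      exact hx (WithLp.toLp 2 (A i)) (Submodule.subset_span ⟨i, hi, rfl⟩)
    have hmv : (A.submatrix (fun i : T => (i : Fin m)) id).mulVec x = 0 := by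
      funext i
      have := hx' (i : Fin m) i.2
      rw [PiLp.inner_apply] at this
      simpa [Matrix.mulVec, dotProduct, mul_comm] using this
    have hx0 : (x : Fin n → ℝ) = 0 := aux_inj _ (hrank T hT) hmv
    simpa using hx0
  have hinf : (⨅ T ∈ {T : Finset (Fin m) | T.card = m - 2 * q}, rowspanE A T) = ⊤ := by
    apply le_antisymm le_top
    refine le_iInf₂ fun T hT => ?_
    rw [hspan T hT]
  refine ⟨hinf, ?_, ?_⟩
  · -- projector part
    intro U _ hU2 hUr
    rw [hinf] at hUr
    have hsurj : ∀ x : EuclideanSpace ℝ (Fin n), ∃ v, U.mulVec v = x := by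
      intro x
      have : x ∈ rangeE U := by rw [hUr]; trivial
      obtain ⟨v, hv⟩ := this; exact ⟨_, hv⟩
    have hid : ∀ x : Fin n → ℝ, U.mulVec x = x := by
      intro x
      obtain ⟨v, hv⟩ := hsurj (WithLp.toLp 2 x)
      calc U.mulVec x = U.mulVec (U.mulVec v) := by rw [hv]
        _ = (U * U).mulVec v := Matrix.mulVec_mulVec v U U
        _ = U.mulVec v := by rw [hU2]
        _ = x := hv
    ext i j
    have := congrFun (hid (Pi.single j 1)) i
    simpa [Matrix.mulVec_single, Pi.single_apply, Matrix.one_apply, eq_comm] using this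
  · -- recovery part
    intro xs e y xhat he hy hmin
    -- residual
    set d : Fin n → ℝ := xhat - xs with hd
    have hr : y - A.mulVec xhat = e - A.mulVec d := by
      funext i
      simp [hy, hd, Matrix.mulVec_sub, Pi.sub_apply]
      ring
    have hresid : l0 (y - A.mulVec xhat) ≤ q := by
      have := hmin xs
      have hys : y - A.mulVec xs = e := by rw [hy]; ring
      rw [hys] at this
      exact this.trans he
    -- support of A d is small
    have hsub : (Finset.univ.filter fun i => A.mulVec d i ≠ 0) ⊆
        (Finset.univ.filter fun i => e i ≠ 0) ∪
        (Finset.univ.filter fun i => (y - A.mulVec xhat) i ≠ 0) := by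
      intro i hi
      simp only [mem_filter, mem_univ, true_and, mem_union] at hi ⊢
      by_contra hcon
      push_neg at hcon
      apply hi
      obtain ⟨h1, h2⟩ := hcon
      have := congrFun hr i
      simp only [Pi.sub_apply] at this
      simp only [Pi.sub_apply] at h2
      linarith
    have hcard : (Finset.univ.filter fun i => A.mulVec d i ≠ 0).card ≤ 2 * q := by
      calc (Finset.univ.filter fun i => A.mulVec d i ≠ 0).card
          ≤ _ := Finset.card_le_card hsub
        _ ≤ (Finset.univ.filter fun i => e i ≠ 0).card +
            (Finset.univ.filter fun i => (y - A.mulVec xhat) i ≠ 0).card :=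
            Finset.card_union_le _ _
        _ ≤ q + q := Nat.add_le_add he hresid
        _ = 2 * q := by ring
    -- zero set is large
    have hzcard : m - 2 * q ≤ (Finset.univ.filter fun i => A.mulVec d i = 0).card := by
      have := Finset.card_filter_add_card_filter_not
        (s := (Finset.univ : Finset (Fin m))) (p := fun i => A.mulVec d i = 0)
      simp only [Finset.card_univ, Fintype.card_fin] at this
      have h2 : (Finset.univ.filter fun i => ¬ A.mulVec d i = 0).card ≤ 2 * q := hcard
      omega
    obtain ⟨T, hTsub, hTcard⟩ := Finset.exists_subset_card_eq hzcard
    have hmv : (A.submatrix (fun i : T => (i : Fin m)) id).mulVec d = 0 := by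
      funext i
      have hiz : A.mulVec d (i : Fin m) = 0 := by
        have := hTsub i.2
        simpa using this
      simpa [Matrix.mulVec, dotProduct] using hiz
    have hd0 : d = 0 := aux_inj _ (hrank T hTcard) hmv
    funext j
    have := congrFun hd0 j
    simp only [hd, Pi.sub_apply, Pi.zero_apply] at this
    linarith
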